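/- For every integer p ≥ 2, the density f_p(x) = (2^{p-1}√(2π))⁻¹ ∫_{‖x‖_∞}^∞ y^{2-p} e^{-y²/2} dy on ℝ^p has standard normal marginals: integrating out x_p over ℝ yields f_{p-1}(x₁,…,x_{p-1}), and f₁(x₁) = (2π)^{-1/2} e^{-x₁²/2}. -/

import Mathlib

open MeasureTheory
open scoped ENNReal

/-- The Khintchine mixture density in `p` dimensions; `‖x‖` on `Fin p → ℝ` is the sup norm. -/
noncomputable def khintchineDensity (p : ℕ) (x : Fin p → ℝ) : ℝ :=
  ((2 : ℝ) ^ ((p : ℝ) - 1) * Real.sqrt (2 * Real.pi))⁻¹ *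
    ∫ y in Set.Ioi ‖x‖, y ^ ((2 : ℝ) - (p : ℝ)) * Real.exp (-y ^ 2 / 2)

lemma khintchine_aux_exp (a : ℝ) (ha : 0 ≤ a) :
    ∫ y in Set.Ioi a, y * Real.exp (-y ^ 2 / 2) = Real.exp (-a ^ 2 / 2) := by
  have hderiv : ∀ y ∈ Set.Ici a, HasDerivAt (fun y : ℝ => -Real.exp (-y ^ 2 / 2))
      (y * Real.exp (-y ^ 2 / 2)) y := by
    intro y _
    have h1 : HasDerivAt (fun y : ℝ => -y ^ 2 / 2) (-y) y := by
      have h := ((hasDerivAt_pow 2 y).neg).div_const 2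
      refine h.congr_deriv ?_
      simp; ring
    have h2 := (h1.exp).neg
    refine h2.congr_deriv ?_
    ring
  have hg : Filter.Tendsto (fun y : ℝ => -Real.exp (-y ^ 2 / 2)) Filter.atTop (nhds 0) := by
    have h1 : Filter.Tendsto (fun y : ℝ => -y ^ 2 / 2) Filter.atTop Filter.atBot := by
      apply Filter.Tendsto.atBot_div_const (by norm_num : (0:ℝ) < 2)
      exact Filter.tendsto_neg_atBot_iff.mpr (Filter.tendsto_pow_atTop (by norm_num))
    have := (Real.tendsto_exp_atBot.comp h1).neg
    simpa using this
  have hpos : ∀ y ∈ Set.Ioi a, 0 ≤ y * Real.exp (-y ^ 2 / 2) := fun y hy =>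
    mul_nonneg (le_trans ha (le_of_lt hy)) (Real.exp_pos _).le
  have := integral_Ioi_of_hasDerivAt_of_nonneg' hderiv hpos hg
  simpa using this

lemma khintchine_norm_snoc {q : ℕ} (x : Fin q → ℝ) (t : ℝ) :
    ‖(Fin.snoc x t : Fin (q+1) → ℝ)‖ = max ‖x‖ |t| := by
  apply le_antisymm
  · rw [pi_norm_le_iff_of_nonneg (le_max_of_le_left (norm_nonneg x))]
    intro i
    refine Fin.lastCases ?_ ?_ i
    · simp [Real.norm_eq_abs]
    · intro j
      simp only [Fin.snoc_castSucc]
      exact le_max_of_le_left (norm_le_pi_norm x j)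
  · apply max_le
    · rw [pi_norm_le_iff_of_nonneg (norm_nonneg _)]
      intro j
      have : x j = (Fin.snoc x t : Fin (q+1) → ℝ) (Fin.castSucc j) := by simp
      rw [this]
      exact norm_le_pi_norm _ _
    · have : |t| = ‖(Fin.snoc x t : Fin (q+1) → ℝ) (Fin.last q)‖ := by simp [Real.norm_eq_abs]
      rw [this]
      exact norm_le_pi_norm _ _

/-- Integrating out the last coordinate of `f_p` gives `f_{q-1}` (stated with `p = q + 1`),
and `f₁` is the standard normal density. -/
theorem khintchine_density_marginals (q : ℕ) (hq : 1 ≤ q) :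
    (∀ x : Fin q → ℝ,
        (∫ t : ℝ, khintchineDensity (q + 1) (Fin.snoc x t)) = khintchineDensity q x) ∧
    (∀ x : Fin 1 → ℝ,
        khintchineDensity 1 x = (Real.sqrt (2 * Real.pi))⁻¹ * Real.exp (-(x 0) ^ 2 / 2)) := by
  constructor
  · intro x
    have hπ : 0 < Real.sqrt (2 * Real.pi) := Real.sqrt_pos.mpr (by positivity)
    set a := ‖x‖ with ha_def
    have ha : 0 ≤ a := norm_nonneg x
    set g₁ : ℝ → ℝ := fun y => y ^ ((1:ℝ) - (q:ℝ)) * Real.exp (-y ^ 2 / 2) with hg₁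
    set g₂ : ℝ → ℝ := fun y => y ^ ((2:ℝ) - (q:ℝ)) * Real.exp (-y ^ 2 / 2) with hg₂
    have hg₁m : Measurable g₁ := by fun_prop
    have hg₂m : Measurable g₂ := by fun_prop
    have hg₁0 : ∀ y : ℝ, 0 ≤ y → 0 ≤ g₁ y := fun y hy =>
      mul_nonneg (Real.rpow_nonneg hy _) (Real.exp_pos _).le
    have hg₂0 : ∀ y : ℝ, 0 ≤ y → 0 ≤ g₂ y := fun y hy =>
      mul_nonneg (Real.rpow_nonneg hy _) (Real.exp_pos _).le
    set F : ℝ → ℝ≥0∞ := fun y => ENNReal.ofReal (g₁ y) with hF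
    have hFm : Measurable F := hg₁m.ennreal_ofReal
    -- Bochner set integral = toReal of lintegral
    have key : ∀ g : ℝ → ℝ, Measurable g → (∀ y : ℝ, 0 ≤ y → 0 ≤ g y) → ∀ m : ℝ, 0 ≤ m →
        ∫ y in Set.Ioi m, g y = (∫⁻ y in Set.Ioi m, ENNReal.ofReal (g y)).toReal := by
      intro g hgm hg m hm
      rw [integral_eq_lintegral_of_nonneg_ae]
      · exact (ae_restrict_iff' measurableSet_Ioi).mpr
          (Filter.Eventually.of_forall fun y hy => hg y (le_trans hm (le_of_lt hy)))
      · exact hgm.aestronglyMeasurable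
    -- finiteness of the tail lintegral of F for positive lower bound
    have hfin : ∀ m : ℝ, 0 < m → (∫⁻ y in Set.Ioi m, F y) ≠ ⊤ := by
      intro m hm
      have hexp : Integrable (fun y : ℝ => Real.exp (-y ^ 2 / 2)) := by
        have h := integrable_exp_neg_mul_sq (b := (1:ℝ)/2) (by norm_num)
        have heq : (fun y : ℝ => Real.exp (-y ^ 2 / 2))
            = fun y : ℝ => Real.exp (-(1/2) * y ^ 2) := by
          funext y; ring_nf
        rw [heq]; exact h
      have hint : Integrable (fun y : ℝ => m ^ ((1:ℝ) - (q:ℝ)) * Real.exp (-y ^ 2 / 2)) :=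
        hexp.const_mul _
      have hle : (∫⁻ y in Set.Ioi m, F y) ≤
          ∫⁻ y in Set.Ioi m, ENNReal.ofReal (m ^ ((1:ℝ) - (q:ℝ)) * Real.exp (-y ^ 2 / 2)) := by
        apply lintegral_mono_ae
        rw [ae_restrict_iff' measurableSet_Ioi]
        apply Filter.Eventually.of_forall
        intro y hy
        apply ENNReal.ofReal_le_ofReal
        apply mul_le_mul_of_nonneg_right _ (Real.exp_pos _).le
        exact Real.rpow_le_rpow_of_nonpos hm (le_of_lt hy)
          (sub_nonpos.mpr (by exact_mod_cast hq))
      exact ne_of_lt (lt_of_le_of_lt hle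
        (lt_of_le_of_lt (setLIntegral_le_lintegral _ _) hint.lintegral_lt_top))
    -- the kernel function
    set f : ℝ → ℝ → ℝ≥0∞ := fun t y => if max a |t| < y then F y else 0 with hf
    have hfm : Measurable (Function.uncurry f) := by
      have huf : Function.uncurry f = fun p : ℝ × ℝ => if max a |p.1| < p.2 then F p.2 else 0 :=
        rfl
      rw [huf]
      exact Measurable.ite (measurableSet_lt (by fun_prop) measurable_snd)
        (hFm.comp measurable_snd) measurable_const
    have hI : ∀ t : ℝ, (∫⁻ y in Set.Ioi (max a |t|), F y) = ∫⁻ y, f t y := by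
      intro t
      rw [← lintegral_indicator measurableSet_Ioi]
      apply lintegral_congr
      intro y
      simp only [Set.indicator, Set.mem_Ioi, hf]
    have hinner : ∀ y : ℝ, (∫⁻ t, f t y) =
        Set.indicator (Set.Ioi a) (fun y => ENNReal.ofReal (2 * g₂ y)) y := by
      intro y
      by_cases hy : a < y
      · have hy0 : 0 < y := lt_of_le_of_lt ha hy
        have h1 : ∀ t : ℝ, f t y = Set.indicator (Set.Ioo (-y) y) (fun _ => F y) t := by
          intro t
          simp only [hf, Set.indicator, Set.mem_Ioo]
          by_cases ht : |t| < y
          · rw [if_pos (max_lt hy ht), if_pos (abs_lt.mp ht)]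
          · rw [if_neg fun h => ht (lt_of_le_of_lt (le_max_right a |t|) h),
              if_neg fun h => ht (abs_lt.mpr h)]
        rw [lintegral_congr h1, lintegral_indicator measurableSet_Ioo, setLIntegral_const,
          Real.volume_Ioo, Set.indicator_of_mem (Set.mem_Ioi.mpr hy), hF,
          ← ENNReal.ofReal_mul (hg₁0 y hy0.le)]
        congr 1
        have hr : y ^ ((2:ℝ) - (q:ℝ)) = y ^ ((1:ℝ) - (q:ℝ)) * y ^ (1:ℝ) := by
          rw [← Real.rpow_add hy0]
          congr 1
          ring
        simp only [hg₁, hg₂, hr, Real.rpow_one]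
        ring
      · push_neg at hy
        have h0 : ∀ t : ℝ, f t y = 0 := fun t =>
          if_neg (not_lt.mpr (le_trans hy (le_max_left _ _)))
        rw [lintegral_congr h0, Set.indicator_of_notMem (by simpa using hy)]
        simp
    have hImeas : Measurable fun t : ℝ => ∫⁻ y, f t y := hfm.lintegral_prod_right
    have hIfin : ∀ᵐ t : ℝ, (∫⁻ y, f t y) ≠ ⊤ := by
      rw [MeasureTheory.ae_iff]
      have hz : (volume ({0} : Set ℝ)) = 0 := Real.volume_singleton
      refine measure_mono_null ?_ hz
      intro t ht
      simp only [Set.mem_setOf_eq, not_not] at ht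
      by_contra h0
      have hmt : 0 < max a |t| :=
        lt_of_lt_of_le (abs_pos.mpr (by simpa using h0)) (le_max_right _ _)
      exact hfin _ hmt (by rw [hI t]; exact ht)
    -- main computation via Tonelli
    have core : (∫ t : ℝ, (∫⁻ y in Set.Ioi (max a |t|), F y).toReal) =
        (2 * ∫⁻ y in Set.Ioi a, ENNReal.ofReal (g₂ y)).toReal := by
      simp only [hI]
      rw [integral_eq_lintegral_of_nonneg_ae
        (Filter.Eventually.of_forall fun t => ENNReal.toReal_nonneg)
        hImeas.ennreal_toReal.aestronglyMeasurable]
      congr 1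
      rw [lintegral_congr_ae (hIfin.mono fun t ht => by rw [ENNReal.ofReal_toReal ht]),
        lintegral_lintegral_swap hfm.aemeasurable, lintegral_congr hinner,
        lintegral_indicator measurableSet_Ioi,
        ← lintegral_const_mul 2 hg₂m.ennreal_ofReal]
      apply lintegral_congr
      intro y
      rw [ENNReal.ofReal_mul (by norm_num : (0:ℝ) ≤ 2), ENNReal.ofReal_ofNat]
    -- unfold the LHS densities
    have hc1 : ((2:ℝ) - ((q+1:ℕ):ℝ)) = 1 - (q:ℝ) := by push_cast; ring
    have hc2 : (((q+1:ℕ):ℝ) - 1) = (q:ℝ) := by push_cast; ring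
    have hL : ∀ t : ℝ, khintchineDensity (q+1) (Fin.snoc x t) =
        ((2:ℝ) ^ (q:ℝ) * Real.sqrt (2*Real.pi))⁻¹ *
          (∫⁻ y in Set.Ioi (max a |t|), F y).toReal := by
      intro t
      rw [khintchineDensity, khintchine_norm_snoc x t, hc1, hc2, ← ha_def,
        key g₁ hg₁m hg₁0 _ (le_trans ha (le_max_left _ _))]
    have hR : khintchineDensity q x =
        ((2:ℝ) ^ ((q:ℝ) - 1) * Real.sqrt (2*Real.pi))⁻¹ *
          (∫⁻ y in Set.Ioi a, ENNReal.ofReal (g₂ y)).toReal := by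
      rw [khintchineDensity, ← ha_def, key g₂ hg₂m hg₂0 a ha]
    have hconst : ((2:ℝ) ^ (q:ℝ) * Real.sqrt (2*Real.pi))⁻¹ * 2 =
        ((2:ℝ) ^ ((q:ℝ) - 1) * Real.sqrt (2*Real.pi))⁻¹ := by
      have h2 : (2:ℝ) ^ (q:ℝ) = 2 ^ ((q:ℝ) - 1) * 2 := by
        rw [show (q:ℝ) = (q:ℝ) - 1 + 1 by ring,
          Real.rpow_add (by norm_num : (0:ℝ) < 2), Real.rpow_one]
        ring_nf
      have hp : (0:ℝ) < 2 ^ ((q:ℝ) - 1) := Real.rpow_pos_of_pos (by norm_num) _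
      rw [h2]
      field_simp
    calc (∫ t : ℝ, khintchineDensity (q + 1) (Fin.snoc x t))
        = ∫ t : ℝ, ((2:ℝ) ^ (q:ℝ) * Real.sqrt (2*Real.pi))⁻¹ *
            (∫⁻ y in Set.Ioi (max a |t|), F y).toReal := by
          exact integral_congr_ae (Filter.Eventually.of_forall hL)
      _ = ((2:ℝ) ^ (q:ℝ) * Real.sqrt (2*Real.pi))⁻¹ *
            ∫ t : ℝ, (∫⁻ y in Set.Ioi (max a |t|), F y).toReal := integral_const_mul _ _
      _ = ((2:ℝ) ^ (q:ℝ) * Real.sqrt (2*Real.pi))⁻¹ *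
            (2 * ∫⁻ y in Set.Ioi a, ENNReal.ofReal (g₂ y)).toReal := by rw [core]
      _ = (((2:ℝ) ^ (q:ℝ) * Real.sqrt (2*Real.pi))⁻¹ * 2) *
            (∫⁻ y in Set.Ioi a, ENNReal.ofReal (g₂ y)).toReal := by
          rw [ENNReal.toReal_mul]
          simp [mul_assoc]
      _ = khintchineDensity q x := by rw [hconst, hR]
  · intro x
    have hx : ‖x‖ = |x 0| := by
      have hxc : x = fun _ => x 0 := funext fun i => by rw [Subsingleton.elim i 0]
      rw [hxc, pi_norm_const, Real.norm_eq_abs]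
    have he1 : ((2:ℝ) - ((1:ℕ):ℝ)) = 1 := by norm_num
    have he2 : (((1:ℕ):ℝ) - 1) = 0 := by norm_num
    rw [khintchineDensity, hx, he1, he2]
    have h := khintchine_aux_exp |x 0| (abs_nonneg _)
    simp only [Real.rpow_one]
    rw [h, Real.rpow_zero, one_mul, sq_abs]
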